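/- arXiv:1210.8049 — 2 statements merged into one kernel-verified Lean document; each statement's English description precedes it below -/
import Mathlib

section
/- Let λ be a positive integer and η an odd integer coprime to λ. Define T_N = ∏_{k=1}^{N} (2 sin(π(2k−1)η/(2λ)))^{−2}. Then lim_{N→∞} (log|T_N|)/(2N) = −(log 2)/λ. -/
open Filter Finset

namespace TorsionAux

noncomputable def f (l : ℕ) (η : ℤ) (k : ℕ) : ℝ :=
  Real.log |2 * Real.sin (Real.pi * (2 * (k : ℝ) - 1) * η / (2 * l))|

lemma sin_ne (l : ℕ) (hl : 0 < l) (η : ℤ) (hodd : Odd η) (k : ℕ) :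
    Real.sin (Real.pi * (2 * (k : ℝ) - 1) * η / (2 * l)) ≠ 0 := by
  intro h
  rw [Real.sin_eq_zero_iff] at h
  obtain ⟨n, hn⟩ := h
  have hl' : (l : ℝ) ≠ 0 := Nat.cast_ne_zero.mpr hl.ne'
  have key : ((2 * l * n : ℤ) : ℝ) = ((2 * (k : ℤ) - 1) * η : ℤ) := by
    push_cast
    field_simp at hn
    nlinarith [hn, Real.pi_pos]
  have key' : (2 * (l : ℤ) * n) = (2 * (k : ℤ) - 1) * η := by exact_mod_cast key
  have hev : Even (2 * (l : ℤ) * n) := ⟨l * n, by ring⟩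
  have hod : Odd ((2 * (k : ℤ) - 1) * η) :=
    Odd.mul (⟨(k : ℤ) - 1, by ring⟩ : Odd (2 * (k : ℤ) - 1)) hodd
  rw [key'] at hev
  exact (Int.not_even_iff_odd.mpr hod) hev

lemma abs_one_sub_exp (x : ℝ) :
    ‖1 - Complex.exp (2 * (x : ℂ) * Complex.I)‖ = |2 * Real.sin x| := by
  have hA : Complex.exp ((x : ℂ) * Complex.I) * Complex.exp (-(x : ℂ) * Complex.I) = 1 := by
    rw [← Complex.exp_add]; norm_num
  have h2 : Complex.exp (2 * (x : ℂ) * Complex.I)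
      = Complex.exp ((x : ℂ) * Complex.I) * Complex.exp ((x : ℂ) * Complex.I) := by
    rw [← Complex.exp_add]; ring_nf
  have h1 : (1 : ℂ) - Complex.exp (2 * (x : ℂ) * Complex.I)
      = Complex.exp ((x : ℂ) * Complex.I) * (-2 * Complex.I * Complex.sin x) := by
    rw [h2]
    simp only [Complex.sin]
    linear_combination (-1 : ℂ) * hA +
      Complex.exp ((x : ℂ) * Complex.I) *
        (Complex.exp (-(x : ℂ) * Complex.I) - Complex.exp ((x : ℂ) * Complex.I)) *
        Complex.I_mul_I
  rw [h1, norm_mul, Complex.norm_exp_ofReal_mul_I, one_mul, norm_mul, norm_mul,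
    ← Complex.ofReal_sin, Complex.norm_real, Real.norm_eq_abs, Complex.norm_I, norm_neg, Complex.norm_two, abs_mul]
  norm_num

lemma prod_eq_two (l : ℕ) (hl : 0 < l) (η : ℤ) (hodd : Odd η) (hcop : Int.gcd η (l : ℤ) = 1) :
    ∏ k ∈ Icc 1 l,
      ((1 : ℂ) - Complex.exp ((Real.pi * η / l : ℝ) * Complex.I) ^ (2 * k - 1)) = 2 := by
  set u : ℂ := Complex.exp ((Real.pi * η / l : ℝ) * Complex.I) with hu_def
  have hl' : (l : ℝ) ≠ 0 := Nat.cast_ne_zero.mpr hl.ne'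
  have hlC : (l : ℂ) ≠ 0 := Nat.cast_ne_zero.mpr hl.ne'
  have hul : u ^ l = -1 := by
    rw [hu_def, ← Complex.exp_nat_mul]
    have harg : (l : ℂ) * (((Real.pi * η / l : ℝ) : ℂ) * Complex.I)
        = (η : ℂ) * ((Real.pi : ℂ) * Complex.I) := by
      push_cast
      field_simp [hlC]
    rw [harg, Complex.exp_int_mul, Complex.exp_pi_mul_I]
    exact Odd.neg_one_zpow hodd
  have hω : IsPrimitiveRoot (u ^ 2) l := by
    constructor
    · rw [← pow_mul, mul_comm 2 l, pow_mul, hul]; norm_num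
    · intro m hm
      rw [← pow_mul, hu_def, ← Complex.exp_nat_mul, Complex.exp_eq_one_iff] at hm
      obtain ⟨n, hn⟩ := hm
      have hcast : (((2 * m : ℝ) * (Real.pi * η / l) : ℝ) : ℂ) * Complex.I
          = ((n * (2 * Real.pi) : ℝ) : ℂ) * Complex.I := by
        push_cast at hn ⊢
        linear_combination hn
      have hre : (2 * m : ℝ) * (Real.pi * η / l) = n * (2 * Real.pi) := by
        have := mul_right_cancel₀ Complex.I_ne_zero hcast
        exact_mod_cast this
      have hre2 : Real.pi * (2 * m * η) = Real.pi * (2 * n * l) := by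
        field_simp at hre
        linear_combination (2 * Real.pi) * hre
      have hint : (m : ℤ) * η = n * l := by
        have h3 := mul_left_cancel₀ Real.pi_ne_zero hre2
        have h4 : (m : ℝ) * η = n * l := by linarith
        exact_mod_cast h4
      have hdvd : (l : ℤ) ∣ (m : ℤ) * η := Dvd.intro n (by linarith [hint])
      have hgl : Int.gcd (l : ℤ) η = 1 := by rw [Int.gcd_comm]; exact hcop
      exact Int.natCast_dvd_natCast.mp (Int.dvd_of_dvd_mul_left_of_gcd_one hdvd hgl)
  have key := X_pow_sub_C_eq_prod hω hl hul
  have hev := congrArg (Polynomial.eval (1 : ℂ)) key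
  simp only [Polynomial.eval_sub, Polynomial.eval_pow, Polynomial.eval_X, Polynomial.eval_C,
    Polynomial.eval_prod, one_pow] at hev
  norm_num at hev
  rw [show Icc 1 l = Ico 1 (l + 1) by rw [Finset.Ico_add_one_right_eq_Icc], Finset.prod_Ico_eq_prod_range]
  simp only [Nat.add_sub_cancel]
  rw [hev]
  apply Finset.prod_congr rfl
  intro i _
  congr 1
  rw [← pow_mul, ← pow_succ]
  congr 1
  omega

lemma sum_period (l : ℕ) (hl : 0 < l) (η : ℤ) (hodd : Odd η)
    (hcop : Int.gcd η (l : ℤ) = 1) :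
    ∑ k ∈ Icc 1 l, f l η k = Real.log 2 := by
  have hlC : (l : ℂ) ≠ 0 := Nat.cast_ne_zero.mpr hl.ne'
  have habs : ∀ k ∈ Icc 1 l, |2 * Real.sin (Real.pi * (2 * (k : ℝ) - 1) * η / (2 * l))|
      = ‖
        (1 - Complex.exp ((Real.pi * η / l : ℝ) * Complex.I) ^ (2 * k - 1))‖ := by
    intro k hk
    have hk1 : 1 ≤ k := (Finset.mem_Icc.mp hk).1
    rw [← abs_one_sub_exp]
    congr 2
    rw [← Complex.exp_nat_mul]
    congr 1
    push_cast [Nat.cast_sub (by omega : 1 ≤ 2 * k)]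
    field_simp
  unfold f
  rw [← Real.log_prod
    (fun k _ => abs_ne_zero.mpr (mul_ne_zero two_ne_zero (sin_ne l hl η hodd k)))]
  rw [Finset.prod_congr rfl habs, ← norm_prod, prod_eq_two l hl η hodd hcop]
  simp

lemma f_periodic (l : ℕ) (hl : 0 < l) (η : ℤ) (hodd : Odd η) (k : ℕ) :
    f l η (k + l) = f l η k := by
  unfold f
  have hl' : (l : ℝ) ≠ 0 := Nat.cast_ne_zero.mpr hl.ne'
  have harg : Real.pi * (2 * ((k + l : ℕ) : ℝ) - 1) * η / (2 * l)
      = Real.pi * (2 * (k : ℝ) - 1) * η / (2 * l) + η * Real.pi := by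
    push_cast
    field_simp
    ring
  rw [harg, Real.sin_add_int_mul_pi]
  simp [abs_mul, Odd.neg_one_zpow hodd]

end TorsionAux

namespace TorsionAux

noncomputable def a (l : ℕ) (η : ℤ) (N : ℕ) : ℝ := ∑ k ∈ Icc 1 N, f l η k

lemma window (l : ℕ) (hl : 0 < l) (η : ℤ) (hodd : Odd η) (hcop : Int.gcd η (l : ℤ) = 1)
    (N : ℕ) : ∑ k ∈ Ioc N (N + l), f l η k = Real.log 2 := by
  induction N with
  | zero =>
      rw [zero_add, ← Finset.Icc_add_one_left_eq_Ioc]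
      exact sum_period l hl η hodd hcop
  | succ n ih =>
      have h1 : ∑ k ∈ Ioc n (n + l), f l η k + f l η (n + l + 1)
          = ∑ k ∈ Ioc n (n + l + 1), f l η k :=
        (Finset.sum_Ioc_succ_top (Nat.le_add_right n l) _).symm
      have h2 : ∑ k ∈ Ioc n (n + 1), f l η k + ∑ k ∈ Ioc (n + 1) (n + l + 1), f l η k
          = ∑ k ∈ Ioc n (n + l + 1), f l η k :=
        Finset.sum_Ioc_consecutive _ (Nat.le_succ n) (by omega)
      have h3 : ∑ k ∈ Ioc n (n + 1), f l η k = f l η (n + 1) := by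
        rw [Nat.Ioc_succ_singleton, Finset.sum_singleton]
      have h4 : f l η (n + 1 + l) = f l η (n + 1) := f_periodic l hl η hodd (n + 1)
      have h5 : n + 1 + l = n + l + 1 := by omega
      rw [h5] at h4
      have h6 : Ioc (n + 1) (n + 1 + l) = Ioc (n + 1) (n + l + 1) := by rw [h5]
      rw [h6]
      linarith [h1, h2, h3, ih]

lemma a_add (l : ℕ) (hl : 0 < l) (η : ℤ) (hodd : Odd η) (hcop : Int.gcd η (l : ℤ) = 1)
    (N : ℕ) : a l η (N + l) = a l η N + Real.log 2 := by
  unfold a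
  rw [show Icc 1 (N + l) = Ioc 0 (N + l) by rw [← Finset.Icc_add_one_left_eq_Ioc]; rfl,
    show Icc 1 N = Ioc 0 N by rw [← Finset.Icc_add_one_left_eq_Ioc]; rfl,
    ← Finset.sum_Ioc_consecutive (f l η) (Nat.zero_le N) (Nat.le_add_right N l),
    window l hl η hodd hcop]

lemma a_formula (l : ℕ) (hl : 0 < l) (η : ℤ) (hodd : Odd η) (hcop : Int.gcd η (l : ℤ) = 1)
    (q r : ℕ) : a l η (r + q * l) = a l η r + q * Real.log 2 := by
  induction q with
  | zero => simp
  | succ n ih =>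
      have : r + (n + 1) * l = (r + n * l) + l := by ring
      rw [this, a_add l hl η hodd hcop, ih]
      push_cast
      ring

end TorsionAux

namespace TorsionAux

lemma log_prod_eq (l : ℕ) (hl : 0 < l) (η : ℤ) (hodd : Odd η) (N : ℕ) :
    Real.log |∏ k ∈ Icc 1 N,
        (2 * Real.sin (Real.pi * (2 * (k : ℝ) - 1) * η / (2 * l))) ^ (-2 : ℤ)|
      = -2 * a l η N := by
  rw [Finset.abs_prod, Real.log_prod (fun k _ =>
    abs_ne_zero.mpr (zpow_ne_zero _ (mul_ne_zero two_ne_zero (sin_ne l hl η hodd k))))]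
  unfold a f
  rw [Finset.mul_sum]
  refine Finset.sum_congr rfl fun k _ => ?_
  rw [Real.log_abs, Real.log_abs, Real.log_zpow]
  push_cast
  ring

end TorsionAux

open TorsionAux in
theorem torsion_circle_leading_coeff (l : ℕ) (hl : 0 < l) (η : ℤ)
    (hodd : Odd η) (hcop : Int.gcd η (l : ℤ) = 1) :
    Tendsto
      (fun N : ℕ =>
        Real.log |∏ k ∈ Finset.Icc 1 N,
            (2 * Real.sin (Real.pi * (2 * (k : ℝ) - 1) * η / (2 * l))) ^ (-2 : ℤ)|
          / (2 * N))
      atTop (nhds (-(Real.log 2) / l)) := by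
  have hl' : (l : ℝ) ≠ 0 := Nat.cast_ne_zero.mpr hl.ne'
  set c : ℝ := Real.log 2 / l with hc
  set b : ℕ → ℝ := fun r => a l η r - r * c with hb
  have hlc : (l : ℝ) * c = Real.log 2 := by rw [hc]; field_simp
  have key : ∀ N : ℕ, a l η N - N * c = b (N % l) := by
    intro N
    have e : N = N % l + N / l * l := (Nat.mod_add_div' N l).symm
    calc a l η N - N * c
        = a l η (N % l + N / l * l) - ((N % l + N / l * l : ℕ) : ℝ) * c := by rw [← e]
      _ = b (N % l) := by
          rw [a_formula l hl η hodd hcop]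
          simp only [hb]
          push_cast
          linear_combination (-((N / l : ℕ) : ℝ)) * hlc
  set C : ℝ := ∑ r ∈ range l, |b r| with hC
  have hbound : ∀ N : ℕ, |a l η N - N * c| ≤ C := fun N => by
    rw [key N]
    exact Finset.single_le_sum (fun i _ => abs_nonneg (b i))
      (Finset.mem_range.mpr (Nat.mod_lt N hl))
  have hdiv : Tendsto (fun N : ℕ => a l η N / N - c) atTop (nhds 0) := by
    apply squeeze_zero_norm' ?_ (tendsto_const_div_atTop_nhds_zero_nat C)
    filter_upwards [eventually_ge_atTop 1] with N hN
    have hN0 : (0 : ℝ) < N := by exact_mod_cast hN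
    have heq : a l η N / N - c = (a l η N - N * c) / N := by field_simp
    rw [Real.norm_eq_abs, heq, abs_div, abs_of_pos hN0]
    exact (div_le_div_iff_of_pos_right hN0).mpr (hbound N)
  have hlim : Tendsto (fun N : ℕ => -(a l η N / N)) atTop (nhds (-c)) := by
    have h1 : Tendsto (fun N : ℕ => a l η N / N) atTop (nhds c) := by
      have := hdiv.add_const c
      simpa using this
    exact h1.neg
  have heq : ∀ N : ℕ,
      -(a l η N / N) = Real.log |∏ k ∈ Finset.Icc 1 N,
          (2 * Real.sin (Real.pi * (2 * (k : ℝ) - 1) * η / (2 * l))) ^ (-2 : ℤ)|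
        / (2 * N) := by
    intro N
    rw [log_prod_eq l hl η hodd N, show (-2 : ℝ) * a l η N = 2 * (-(a l η N)) by ring,
      mul_div_mul_left _ _ (two_ne_zero), neg_div]
  rw [show -(Real.log 2) / (l : ℝ) = -c by rw [hc]; rw [neg_div]]
  exact hlim.congr heq
end

section
/- Let p, q be coprime integers ≥ 2, and let a, b be odd integers with 0 < a < p, 0 < b < q. Define T_N = 2^{2N} / ∏_{k=1}^{N} (16 sin²(π(2k−1)a/(2p)) sin²(π(2k−1)b/(2q))). Then lim_{N→∞} (log|T_N|)/(2N) = (1 − 1/p′ − 1/q′) log 2, where p′ = p/gcd(p,a) and q′ = q/gcd(q,b). -/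
open Filter Finset

lemma abs_one_sub_exp (θ : ℝ) :
    ‖1 - Complex.exp (2 * θ * Complex.I)‖ = 2 * |Real.sin θ| := by
  have h1 : (1 : ℂ) - Complex.exp (2 * θ * Complex.I)
      = Complex.exp (θ * Complex.I) * (-2 * Complex.I * Complex.sin θ) := by
    rw [Complex.sin]
    have e2 : Complex.exp (2 * θ * Complex.I)
        = Complex.exp (θ * Complex.I) * Complex.exp (θ * Complex.I) := by
      rw [← Complex.exp_add]; ring_nf
    have e3 : Complex.exp (θ * Complex.I) * Complex.exp (-θ * Complex.I) = 1 := by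
      rw [← Complex.exp_add]; ring_nf; exact Complex.exp_zero
    calc (1 : ℂ) - Complex.exp (2 * θ * Complex.I)
        = Complex.exp (θ * Complex.I) * Complex.exp (-θ * Complex.I)
          - Complex.exp (θ * Complex.I) * Complex.exp (θ * Complex.I) := by rw [e3, ← e2]
      _ = _ := by
          linear_combination (Complex.exp (θ * Complex.I) *
            (Complex.exp (-θ * Complex.I) - Complex.exp (θ * Complex.I))) * Complex.I_sq
  rw [h1, norm_mul, Complex.norm_exp_ofReal_mul_I, one_mul]
  simp [Complex.norm_def, Complex.normSq_mul, ← Complex.ofReal_sin, abs_mul, Real.sqrt_mul_self_eq_abs]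

lemma prod_two_sin (n η : ℕ) (hn : 0 < n) (hη : Odd η) (hco : Nat.Coprime η n) :
    ∏ k ∈ Finset.range n,
      (2 * |Real.sin (Real.pi * (2 * (k : ℝ) + 1) * η / (2 * n))|) = 2 := by
  have hn0 : (n : ℂ) ≠ 0 := by exact_mod_cast hn.ne'
  set ξ : ℂ := Complex.exp (Real.pi * η / n * Complex.I) with hξ
  have hξn : ξ ^ n = -1 := by
    rw [hξ, ← Complex.exp_nat_mul]
    have : (n : ℂ) * (Real.pi * η / n * Complex.I) = (η : ℕ) * (Real.pi * Complex.I) := by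
      field_simp
    rw [this, Complex.exp_nat_mul, Complex.exp_pi_mul_I, hη.neg_one_pow]
  have hξ2 : IsPrimitiveRoot (ξ ^ 2) n := by
    have : ξ ^ 2 = Complex.exp (2 * Real.pi * Complex.I * (η / n)) := by
      rw [hξ, ← Complex.exp_nat_mul]
      · congr 1
        push_cast
        field_simp
    rw [this]
    exact Complex.isPrimitiveRoot_exp_of_coprime η n hn.ne' hco
  have key : ∏ k ∈ Finset.range n, ((1 : ℂ) - (ξ ^ 2) ^ k * ξ) = 2 := by
    have hpoly := X_pow_sub_C_eq_prod hξ2 hn hξn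
    have := congrArg (Polynomial.eval 1) hpoly
    simp only [Polynomial.eval_sub, Polynomial.eval_pow, Polynomial.eval_X,
      Polynomial.eval_C, Polynomial.eval_prod, one_pow] at this
    rw [← this]; ring
  have hterm : ∀ k ∈ Finset.range n,
      (2 * |Real.sin (Real.pi * (2 * (k : ℝ) + 1) * η / (2 * n))|)
        = ‖1 - (ξ ^ 2) ^ k * ξ‖ := by
    intro k _
    have harg : (ξ ^ 2) ^ k * ξ
        = Complex.exp (2 * ((Real.pi * (2 * (k : ℝ) + 1) * η / (2 * n) : ℝ)) * Complex.I) := by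
      rw [hξ, ← pow_mul, ← pow_succ, ← Complex.exp_nat_mul]
      congr 1
      push_cast
      field_simp
    rw [harg, abs_one_sub_exp]
  rw [Finset.prod_congr rfl hterm, ← norm_prod, key]
  simp

lemma cesaro_periodic (f : ℕ → ℝ) (T : ℕ) (hT : 0 < T) (hf : ∀ k, f (k + T) = f k) :
    Tendsto (fun N : ℕ => (∑ k ∈ Finset.range N, f k) / N) atTop
      (nhds ((∑ k ∈ Finset.range T, f k) / T)) := by
  set S : ℝ := ∑ k ∈ Finset.range T, f k with hS
  have hmul : ∀ m k, f (k + T * m) = f k := by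
    intro m
    induction m with
    | zero => simp
    | succ m ih =>
      intro k
      have : k + T * (m + 1) = (k + T) + T * m := by ring
      rw [this, ih, hf]
  have hblock : ∀ m : ℕ, ∑ k ∈ Finset.range (T * m), f k = m * S := by
    intro m
    induction m with
    | zero => simp
    | succ m ih =>
      have : T * (m + 1) = T * m + T := by ring
      rw [this, Finset.sum_range_add, ih]
      have : ∑ k ∈ Finset.range T, f (T * m + k) = S := by
        apply Finset.sum_congr rfl
        intro k _
        rw [add_comm, hmul]
      rw [this]; push_cast; ring
  have hsum : ∀ N : ℕ, ∑ k ∈ Finset.range N, f k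
      = (N / T : ℕ) * S + ∑ k ∈ Finset.range (N % T), f k := by
    intro N
    conv_lhs => rw [← Nat.div_add_mod N T]
    rw [Finset.sum_range_add, hblock]
    congr 1
    apply Finset.sum_congr rfl
    intro k _
    rw [add_comm, hmul]
  set C : ℝ := ∑ k ∈ Finset.range T, |f k| with hC
  have hrem : ∀ r : ℕ, r ≤ T → |∑ k ∈ Finset.range r, f k| ≤ C := by
    intro r hr
    calc |∑ k ∈ Finset.range r, f k| ≤ ∑ k ∈ Finset.range r, |f k| :=
          Finset.abs_sum_le_sum_abs _ _
      _ ≤ C := Finset.sum_le_sum_of_subset_of_nonneg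
          (Finset.range_subset_range.2 hr) (by intro i _ _; positivity)
  have hbound : ∀ N : ℕ, |∑ k ∈ Finset.range N, f k - N * (S / T)| ≤ C + |S| := by
    intro N
    rw [hsum N]
    have hdm : (T : ℝ) * (N / T : ℕ) + (N % T : ℕ) = N := by
      exact_mod_cast congrArg (Nat.cast : ℕ → ℝ) (Nat.div_add_mod N T)
    have hT0 : (T : ℝ) ≠ 0 := by positivity
    have : ((N / T : ℕ) : ℝ) * S + ∑ k ∈ Finset.range (N % T), f k - N * (S / T)
        = ∑ k ∈ Finset.range (N % T), f k - ((N % T : ℕ) : ℝ) * (S / T) := by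
      rw [← hdm]; field_simp; ring
    rw [this]
    have h1 : |∑ k ∈ Finset.range (N % T), f k| ≤ C :=
      hrem _ (le_of_lt (Nat.mod_lt N hT))
    have h2 : |((N % T : ℕ) : ℝ) * (S / T)| ≤ |S| := by
      have hmlt : ((N % T : ℕ) : ℝ) ≤ T := by
        exact_mod_cast le_of_lt (Nat.mod_lt N hT)
      have habs : |((N % T : ℕ) : ℝ) * (S / T)| = ((N % T : ℕ) : ℝ) * (|S| / T) := by
        rw [abs_mul, abs_div, abs_of_nonneg (by positivity : (0:ℝ) ≤ ((N % T : ℕ) : ℝ)),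
          abs_of_nonneg (by positivity : (0:ℝ) ≤ (T : ℝ))]
      rw [habs]
      calc ((N % T : ℕ) : ℝ) * (|S| / T) ≤ (T : ℝ) * (|S| / T) :=
            mul_le_mul_of_nonneg_right hmlt (by positivity)
        _ = |S| := by field_simp
    calc |∑ k ∈ Finset.range (N % T), f k - ((N % T : ℕ) : ℝ) * (S / T)|
        ≤ |∑ k ∈ Finset.range (N % T), f k| + |((N % T : ℕ) : ℝ) * (S / T)| :=
          abs_sub _ _
      _ ≤ C + |S| := add_le_add h1 h2
  rw [← tendsto_sub_nhds_zero_iff]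
  apply squeeze_zero_norm' (a := fun N : ℕ => (C + |S|) / N)
  · filter_upwards [eventually_ge_atTop 1] with N hN
    have hN0 : (N : ℝ) ≠ 0 := by positivity
    have : (∑ k ∈ Finset.range N, f k) / N - S / T
        = (∑ k ∈ Finset.range N, f k - N * (S / T)) / N := by
      have hT0 : (T : ℝ) ≠ 0 := by positivity
      field_simp
    rw [Real.norm_eq_abs, this, abs_div, abs_of_nonneg (by positivity : (0:ℝ) ≤ (N:ℝ))]
    apply div_le_div_of_nonneg_right (hbound N) (by positivity)
  · exact tendsto_const_div_atTop_nhds_zero_nat _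

lemma sin_ne_zero_aux (p a k : ℕ) (hp : 0 < p) (haodd : Odd a) :
    Real.sin (Real.pi * (2 * (k : ℝ) + 1) * a / (2 * p)) ≠ 0 := by
  intro h
  obtain ⟨n, hn⟩ := Real.sin_eq_zero_iff.mp h
  have hπ : Real.pi ≠ 0 := Real.pi_ne_zero
  rw [eq_div_iff (by positivity : (2 * (p:ℝ)) ≠ 0)] at hn
  have h2 : Real.pi * ((n : ℝ) * (2 * p)) = Real.pi * ((2 * k + 1) * a) := by
    linear_combination hn
  have hr : (n : ℝ) * (2 * p) = (2 * (k:ℝ) + 1) * a := mul_left_cancel₀ hπ h2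
  have hz : (n : ℤ) * (2 * p) = (2 * k + 1) * a := by exact_mod_cast hr
  have he : Even ((n : ℤ) * (2 * p)) := ⟨n * p, by ring⟩
  have ho : Odd ((2 * (k : ℤ) + 1) * a) :=
    Odd.mul (⟨k, by ring⟩ : Odd (2 * (k : ℤ) + 1)) (by exact_mod_cast haodd)
  rw [hz] at he
  exact (Int.not_odd_iff_even.mpr he) ho

lemma sum_Icc_one {M : Type*} [AddCommMonoid M] (f : ℕ → M) (N : ℕ) :
    ∑ k ∈ Finset.Icc 1 N, f k = ∑ k ∈ Finset.range N, f (k + 1) := by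
  induction N with
  | zero => simp
  | succ n ih => rw [Finset.sum_Icc_succ_top (by omega), ih, Finset.sum_range_succ]

lemma prod_Icc_one {M : Type*} [CommMonoid M] (f : ℕ → M) (N : ℕ) :
    ∏ k ∈ Finset.Icc 1 N, f k = ∏ k ∈ Finset.range N, f (k + 1) := by
  induction N with
  | zero => simp
  | succ n ih => rw [Finset.prod_Icc_succ_top (by omega), ih, Finset.prod_range_succ]

lemma avg_log_sin (p a : ℕ) (hp : 0 < p) (ha : 0 < a) (haodd : Odd a) :
    Tendsto (fun N : ℕ =>
        (∑ k ∈ Finset.range N,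
          Real.log |2 * Real.sin (Real.pi * (2 * (k : ℝ) + 1) * a / (2 * p))|) / N)
      atTop (nhds (Real.log 2 / ((p / Nat.gcd p a : ℕ) : ℝ))) := by
  set g := Nat.gcd p a with hg
  have hg0 : 0 < g := Nat.gcd_pos_of_pos_left a hp
  set p' := p / g with hp'
  set a' := a / g with ha'
  have hpp : g * p' = p := Nat.mul_div_cancel' (Nat.gcd_dvd_left p a)
  have haa : g * a' = a := Nat.mul_div_cancel' (Nat.gcd_dvd_right p a)
  have hp'0 : 0 < p' := Nat.div_pos (Nat.le_of_dvd hp (Nat.gcd_dvd_left p a)) hg0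
  have ha'odd : Odd a' := (Nat.odd_mul.mp (haa ▸ haodd)).2
  have hco : Nat.Coprime a' p' := (Nat.coprime_div_gcd_div_gcd hg0).symm
  -- the key real identity between angles
  have hangle : ∀ x : ℝ, x * (a : ℝ) / (2 * p) = x * (a' : ℝ) / (2 * p') := by
    intro x
    have h1 : (a : ℝ) * p' = (a' : ℝ) * p := by
      have : a * p' = a' * p := by
        calc a * p' = (g * a') * p' := by rw [haa]
          _ = a' * (g * p') := by ring
          _ = a' * p := by rw [hpp]
      exact_mod_cast this
    have hp0 : (p : ℝ) ≠ 0 := by positivity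
    have hp'0' : (p' : ℝ) ≠ 0 := by positivity
    field_simp
    linear_combination x * h1
  set f : ℕ → ℝ := fun k =>
    Real.log |2 * Real.sin (Real.pi * (2 * (k : ℝ) + 1) * a / (2 * p))| with hf
  have hper : ∀ k, f (k + p') = f k := by
    intro k
    have harg : Real.pi * (2 * ((k + p' : ℕ) : ℝ) + 1) * a / (2 * p)
        = Real.pi * (2 * (k : ℝ) + 1) * a / (2 * p) + (a' : ℕ) * Real.pi := by
      rw [hangle (Real.pi * (2 * ((k + p' : ℕ) : ℝ) + 1)),
        hangle (Real.pi * (2 * (k : ℝ) + 1))]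
      have hp'0' : (p' : ℝ) ≠ 0 := by positivity
      push_cast
      field_simp
      ring
    simp only [hf, harg, Real.sin_add_nat_mul_pi, abs_mul, abs_pow, abs_neg, abs_one,
      one_pow, one_mul]
  have hsumT : (∑ k ∈ Finset.range p', f k) = Real.log 2 := by
    have hterm : ∀ k ∈ Finset.range p', f k
        = Real.log (2 * |Real.sin (Real.pi * (2 * (k : ℝ) + 1) * a' / (2 * p'))|) := by
      intro k _
      simp only [hf]
      rw [abs_mul, abs_two, hangle (Real.pi * (2 * (k : ℝ) + 1))]
    rw [Finset.sum_congr rfl hterm, ← Real.log_prod, prod_two_sin p' a' hp'0 ha'odd hco]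
    intro k _
    have := sin_ne_zero_aux p' a' k hp'0 ha'odd
    positivity
  have := cesaro_periodic f p' hp'0 hper
  rwa [hsumT] at this

theorem torus_knot_leading_coeff
    (p q : ℕ) (hp : 2 ≤ p) (hq : 2 ≤ q) (hpq : Nat.Coprime p q)
    (a b : ℕ) (ha : 0 < a) (hap : a < p) (hb : 0 < b) (hbq : b < q)
    (haodd : Odd a) (hbodd : Odd b) :
    Tendsto
      (fun N : ℕ =>
        Real.log |(2 : ℝ) ^ (2 * N) /
            ∏ k ∈ Finset.Icc 1 N,
              (16 * Real.sin (Real.pi * (2 * (k : ℝ) - 1) * a / (2 * p)) ^ 2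
                  * Real.sin (Real.pi * (2 * (k : ℝ) - 1) * b / (2 * q)) ^ 2)|
          / (2 * N))
      atTop
      (nhds ((1 - 1 / ((p / Nat.gcd p a : ℕ) : ℝ)
          - 1 / ((q / Nat.gcd q b : ℕ) : ℝ)) * Real.log 2)) := by
  have hp0 : 0 < p := by omega
  have hq0 : 0 < q := by omega
  set A : ℕ → ℝ := fun k => Real.sin (Real.pi * (2 * (k : ℝ) + 1) * a / (2 * p)) with hA
  set B : ℕ → ℝ := fun k => Real.sin (Real.pi * (2 * (k : ℝ) + 1) * b / (2 * q)) with hB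
  have hA0 : ∀ k, A k ≠ 0 := fun k => sin_ne_zero_aux p a k hp0 haodd
  have hB0 : ∀ k, B k ≠ 0 := fun k => sin_ne_zero_aux q b k hq0 hbodd
  have hSa := avg_log_sin p a hp0 ha haodd
  have hSb := avg_log_sin q b hq0 hb hbodd
  have hlim : Tendsto (fun N : ℕ => Real.log 2
      - (∑ k ∈ Finset.range N, Real.log |2 * A k|) / N
      - (∑ k ∈ Finset.range N, Real.log |2 * B k|) / N) atTop
      (nhds (Real.log 2 - Real.log 2 / ((p / Nat.gcd p a : ℕ) : ℝ)
        - Real.log 2 / ((q / Nat.gcd q b : ℕ) : ℝ))) :=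
    (tendsto_const_nhds.sub hSa).sub hSb
  have htarget : (1 - 1 / ((p / Nat.gcd p a : ℕ) : ℝ)
        - 1 / ((q / Nat.gcd q b : ℕ) : ℝ)) * Real.log 2
      = Real.log 2 - Real.log 2 / ((p / Nat.gcd p a : ℕ) : ℝ)
        - Real.log 2 / ((q / Nat.gcd q b : ℕ) : ℝ) := by ring
  rw [htarget]
  apply hlim.congr'
  filter_upwards [eventually_ge_atTop 1] with N hN
  have hNR : (0 : ℝ) < N := by exact_mod_cast Nat.lt_of_lt_of_le Nat.zero_lt_one hN
  have hprod : (∏ k ∈ Finset.Icc 1 N,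
        (16 * Real.sin (Real.pi * (2 * (k : ℝ) - 1) * a / (2 * p)) ^ 2
            * Real.sin (Real.pi * (2 * (k : ℝ) - 1) * b / (2 * q)) ^ 2))
      = ∏ k ∈ Finset.range N, ((2 * A k) ^ 2 * (2 * B k) ^ 2) := by
    rw [prod_Icc_one]
    apply Finset.prod_congr rfl
    intro k _
    have ea : Real.pi * (2 * ((k + 1 : ℕ) : ℝ) - 1) * a / (2 * p)
        = Real.pi * (2 * (k : ℝ) + 1) * a / (2 * p) := by push_cast; ring_nf
    have eb : Real.pi * (2 * ((k + 1 : ℕ) : ℝ) - 1) * b / (2 * q)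
        = Real.pi * (2 * (k : ℝ) + 1) * b / (2 * q) := by push_cast; ring_nf
    rw [ea, eb]
    simp only [hA, hB]
    ring
  have hPpos : (0 : ℝ) < ∏ k ∈ Finset.range N, ((2 * A k) ^ 2 * (2 * B k) ^ 2) := by
    apply Finset.prod_pos
    intro k _
    have := hA0 k
    have := hB0 k
    positivity
  have hlog : Real.log |(2 : ℝ) ^ (2 * N) /
        ∏ k ∈ Finset.range N, ((2 * A k) ^ 2 * (2 * B k) ^ 2)|
      = (2 * N) * Real.log 2
        - (2 * (∑ k ∈ Finset.range N, Real.log |2 * A k|)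
          + 2 * (∑ k ∈ Finset.range N, Real.log |2 * B k|)) := by
    rw [abs_div, Real.log_div (by positivity) (by positivity), abs_pow, abs_two,
      Real.log_pow, abs_of_pos hPpos, Real.log_prod (fun k _ => by
        have := hA0 k; have := hB0 k; positivity)]
    have : ∀ k ∈ Finset.range N, Real.log ((2 * A k) ^ 2 * (2 * B k) ^ 2)
        = 2 * Real.log |2 * A k| + 2 * Real.log |2 * B k| := by
      intro k _
      rw [Real.log_mul (by have := hA0 k; positivity) (by have := hB0 k; positivity),
        Real.log_pow, Real.log_pow, Real.log_abs, Real.log_abs]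
      push_cast; ring
    rw [Finset.sum_congr rfl this, Finset.sum_add_distrib, ← Finset.mul_sum, ← Finset.mul_sum]
    push_cast; ring
  rw [hprod, hlog]
  have hN2 : (2 : ℝ) * N ≠ 0 := by positivity
  field_simp
  ring
end
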